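/- Let W be a nonempty finite type and b : Set W → ℝ a finitely additive probability (b(∅) = 0, b(Set.univ) = 1, b(X) ≥ 0 for all X, and b(A ∪ B) = b(A) + b(B) whenever A ∩ B = ∅). Then the sum of b(E) over all elementary sets E (the minimal elements under set inclusion of {X ⊆ W | b(X) > 0}) equals 1. -/

import Mathlib

open Classical

theorem sum_prob_elementary_eq_one (W : Type*) [Fintype W] [Nonempty W]
    (b : Set W → ℝ)
    (hempty : b ∅ = 0) (huniv : b Set.univ = 1) (hnonneg : ∀ X : Set W, 0 ≤ b X)
    (hadd : ∀ A B : Set W, A ∩ B = ∅ → b (A ∪ B) = b A + b B) :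
    ∑ E ∈ Finset.univ.filter (fun E : Set W => Minimal (fun X : Set W => b X > 0) E),
      b E = 1 := by
  -- monotonicity
  have hmono : ∀ A B : Set W, A ⊆ B → b A ≤ b B := by
    intro A B hAB
    have h1 : A ∩ (B \ A) = ∅ := by ext x; simp
    have h2 : A ∪ (B \ A) = B := by
      ext x; simp only [Set.mem_union, Set.mem_diff]
      constructor
      · rintro (h | ⟨h, _⟩); exacts [hAB h, h]
      · intro h; by_cases hx : x ∈ A <;> tauto
    have := hadd A (B \ A) h1
    rw [h2] at this
    linarith [hnonneg (B \ A)]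
  -- additivity when the intersection is null
  have hadd' : ∀ A B : Set W, b (A ∩ B) = 0 → b (A ∪ B) = b A + b B := by
    intro A B h0
    have e1 : (A \ B) ∩ B = ∅ := by ext x; simp
    have e2 : (A \ B) ∪ B = A ∪ B := by ext x; by_cases hx : x ∈ B <;> simp [hx]
    have e3 : (A \ B) ∩ (A ∩ B) = ∅ := by ext x; simp; tauto
    have e4 : (A \ B) ∪ (A ∩ B) = A := by
      ext x; by_cases hx : x ∈ B <;> simp [hx]
    have hA : b A = b (A \ B) := by
      have := hadd (A \ B) (A ∩ B) e3
      rw [e4, h0] at this; linarith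
    have := hadd (A \ B) B e1
    rw [e2] at this; rw [this, hA]
  -- finite subadditivity
  have hsub : ∀ (s : Finset (Set W)) (f : Set W → Set W),
      b (⋃ E ∈ s, f E) ≤ ∑ E ∈ s, b (f E) := by
    intro s f
    induction s using Finset.induction_on with
    | empty => simp [hempty]
    | @insert a s ha ih =>
      rw [Finset.sum_insert ha]
      have hU : (⋃ E ∈ insert a s, f E) = f a ∪ ⋃ E ∈ s, f E := by
        simp [Set.biUnion_insert]
      rw [hU]
      set T := ⋃ E ∈ s, f E
      have e1 : (f a) ∩ (T \ f a) = ∅ := by ext x; simp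
      have e2 : (f a) ∪ (T \ f a) = f a ∪ T := by
        ext x; by_cases hx : x ∈ f a <;> simp [hx]
      have := hadd (f a) (T \ f a) e1
      rw [e2] at this
      have := hmono (T \ f a) T Set.diff_subset
      linarith
  set P : Set W → Prop := fun X => b X > 0 with hP
  set M := Finset.univ.filter (fun E : Set W => Minimal P E) with hM
  -- minimal sets have null intersections
  have hnull : ∀ E F : Set W, Minimal P E → Minimal P F → E ≠ F → b (E ∩ F) = 0 := by
    intro E F hE hF hne
    by_contra h
    have hpos : b (E ∩ F) > 0 := lt_of_le_of_ne (hnonneg _) (Ne.symm h)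
    have h1 : E ⊆ E ∩ F := hE.2 hpos Set.inter_subset_left
    have h2 : F ⊆ E ∩ F := hF.2 hpos Set.inter_subset_right
    exact hne (Set.Subset.antisymm (h1.trans Set.inter_subset_right)
      (h2.trans Set.inter_subset_left))
  -- additivity over families of minimal sets
  have hsum : ∀ s : Finset (Set W), (∀ E ∈ s, Minimal P E) →
      b (⋃ E ∈ s, E) = ∑ E ∈ s, b E := by
    intro s
    induction s using Finset.induction_on with
    | empty => simp [hempty]
    | @insert a s ha ih =>
      intro hmin
      have hUa : (⋃ E ∈ insert a s, E) = a ∪ ⋃ E ∈ s, E := by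
        simp [Set.biUnion_insert]
      rw [hUa, Finset.sum_insert ha, ← ih (fun E hE => hmin E (Finset.mem_insert_of_mem hE))]
      apply hadd'
      have hcap : a ∩ (⋃ E ∈ s, E) ⊆ ⋃ E ∈ s, (a ∩ E) := by
        intro x hx
        obtain ⟨hxa, hxU⟩ := hx
        simp only [Set.mem_iUnion] at hxU ⊢
        obtain ⟨E, hE, hxE⟩ := hxU
        exact ⟨E, hE, hxa, hxE⟩
      have h1 : b (a ∩ ⋃ E ∈ s, E) ≤ ∑ E ∈ s, b (a ∩ E) :=
        le_trans (hmono _ _ hcap) (hsub s (fun E => a ∩ E))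
      have h2 : ∑ E ∈ s, b (a ∩ E) = 0 := by
        apply Finset.sum_eq_zero
        intro E hE
        exact hnull a E (hmin a (Finset.mem_insert_self a s))
          (hmin E (Finset.mem_insert_of_mem hE)) (fun h => ha (h ▸ hE))
      have := hnonneg (a ∩ ⋃ E ∈ s, E)
      linarith
  set U : Set W := ⋃ E ∈ M, E with hU
  have hbU : b U = ∑ E ∈ M, b E := by
    apply hsum
    intro E hE
    simpa [hM] using hE
  -- complement of U is null
  have hcomp : b Uᶜ = 0 := by
    by_contra h
    have hpos : b Uᶜ > 0 := lt_of_le_of_ne (hnonneg _) (Ne.symm h)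
    obtain ⟨E, hEle, hEmin⟩ := exists_minimal_le_of_wellFoundedLT P _ hpos
    have hEU : E ⊆ U := by
      intro x hx
      simp only [hU, Set.mem_iUnion]
      exact ⟨E, by simp [hM, hEmin], hx⟩
    have hEempty : E = ∅ := by
      apply Set.eq_empty_iff_forall_notMem.mpr
      intro x hx
      exact (hEle hx) (hEU hx)
    have : b E > 0 := hEmin.1
    rw [hEempty, hempty] at this
    linarith
  have : b (U ∪ Uᶜ) = b U + b Uᶜ := hadd U Uᶜ (by simp)
  rw [Set.union_compl_self, huniv, hcomp, hbU] at this
  linarith
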